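/- Let m, k ≥ 1, let A be an invertible real m×m matrix, let B be a real m×k matrix, let t₀ > 0, and for each t ∈ (0, t₀) let C(t) be a symmetric invertible real k×k matrix such that C(t)^{-1} converges entrywise to the zero matrix as t → 0⁺. Then there exists t₁ ∈ (0, t₀] such that for all t ∈ (0, t₁) the (m+k)×(m+k) block matrix S̃(t) = [[A, B],[Bᵀ, C(t)]] is invertible, and S̃(t)^{-1} converges entrywise, as t → 0⁺, to the block matrix [[A^{-1}, 0],[0, 0]]. -/

import Mathlib

open Matrix Filter

set_option maxHeartbeats 2000000 in
/-- Block-matrix limit at the core of the analysis of the inverse stiffness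
matrix of a patch containing a nearly degenerate triangulation: if
`C(t)⁻¹ → 0` entrywise as `t → 0⁺`, then the inverse of the block matrix
`[[A, B], [Bᵀ, C(t)]]` converges entrywise to `[[A⁻¹, 0], [0, 0]]`. -/
theorem blockMatrix_inverse_limit
    {m k : ℕ} (hm : 1 ≤ m) (hk : 1 ≤ k)
    (A : Matrix (Fin m) (Fin m) ℝ) (hA : IsUnit A)
    (B : Matrix (Fin m) (Fin k) ℝ)
    (t₀ : ℝ) (ht₀ : 0 < t₀)
    (C : ℝ → Matrix (Fin k) (Fin k) ℝ)
    (hCsymm : ∀ t, 0 < t → t < t₀ → (C t).IsSymm)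
    (hCinv : ∀ t, 0 < t → t < t₀ → IsUnit (C t))
    (hClim : ∀ i j, Tendsto (fun t => (C t)⁻¹ i j)
      (nhdsWithin 0 (Set.Ioi 0)) (nhds 0)) :
    ∃ t₁, 0 < t₁ ∧ t₁ ≤ t₀ ∧
      (∀ t, 0 < t → t < t₁ → IsUnit (Matrix.fromBlocks A B Bᵀ (C t))) ∧
      (∀ i j, Tendsto (fun t => (Matrix.fromBlocks A B Bᵀ (C t))⁻¹ i j)
        (nhdsWithin 0 (Set.Ioi 0))
        (nhds (Matrix.fromBlocks A⁻¹ 0 0 0 i j))) := by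
  set l := nhdsWithin (0:ℝ) (Set.Ioi 0) with hl
  set E : ℝ → Matrix (Fin m ⊕ Fin k) (Fin m ⊕ Fin k) ℝ :=
    fun t => Matrix.fromBlocks A (B * (C t)⁻¹) Bᵀ 1 with hEdef
  set E₀ : Matrix (Fin m ⊕ Fin k) (Fin m ⊕ Fin k) ℝ :=
    Matrix.fromBlocks A 0 Bᵀ 1 with hE₀def
  -- C t ⁻¹ → 0 as matrices
  have hCinv0 : Tendsto (fun t => (C t)⁻¹) l (nhds 0) := by
    refine tendsto_pi_nhds.mpr ?_
    intro i
    refine tendsto_pi_nhds.mpr ?_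
    intro j
    simpa using hClim i j
  -- E → E₀
  have hEt : Tendsto E l (nhds E₀) := by
    have hmul : Tendsto (fun t => B * (C t)⁻¹) l (nhds (0 : Matrix (Fin m) (Fin k) ℝ)) := by
      have hc : Continuous (fun X : Matrix (Fin k) (Fin k) ℝ => B * X) :=
        continuous_const.matrix_mul continuous_id
      have := (hc.continuousAt (x := (0 : Matrix (Fin k) (Fin k) ℝ))).tendsto.comp hCinv0
      simpa [Function.comp_def] using this
    have hfb : Continuous (fun X : Matrix (Fin m) (Fin k) ℝ =>
        Matrix.fromBlocks A X Bᵀ (1 : Matrix (Fin k) (Fin k) ℝ)) :=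
      Continuous.matrix_fromBlocks continuous_const continuous_id continuous_const
        continuous_const
    have := (hfb.continuousAt (x := (0 : Matrix (Fin m) (Fin k) ℝ))).tendsto.comp hmul
    simpa [Function.comp_def, hEdef, hE₀def] using this
  have hE₀unit : IsUnit E₀ :=
    Matrix.isUnit_fromBlocks_zero₁₂.mpr ⟨hA, isUnit_one⟩
  have hE₀det : E₀.det ≠ 0 := by
    have := (Matrix.isUnit_iff_isUnit_det E₀).mp hE₀unit
    exact this.ne_zero
  -- eventually det (E t) ≠ 0
  have hdet : Tendsto (fun t => (E t).det) l (nhds E₀.det) :=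
    ((continuous_id.matrix_det).continuousAt.tendsto).comp hEt
  have hEunit_ev : ∀ᶠ t in l, IsUnit (E t) := by
    filter_upwards [hdet.eventually_ne hE₀det] with t ht
    rw [Matrix.isUnit_iff_isUnit_det]
    exact isUnit_iff_ne_zero.mpr ht
  have h0 : ∀ᶠ t in l, 0 < t := by filter_upwards [self_mem_nhdsWithin] with t ht using ht
  have hlt : ∀ᶠ t in l, t < t₀ := by
    have : Set.Ioo (0:ℝ) t₀ ∈ l := Ioo_mem_nhdsGT_of_mem ⟨le_refl 0, ht₀⟩
    filter_upwards [this] with t ht using ht.2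
  -- the good set
  have hS : ∀ᶠ t in l, 0 < t ∧ t < t₀ ∧ IsUnit (E t) := by
    filter_upwards [h0, hlt, hEunit_ev] with t h1 h2 h3 using ⟨h1, h2, h3⟩
  -- key algebraic identities
  have key : ∀ t, 0 < t → t < t₀ → IsUnit (E t) →
      (Matrix.fromBlocks A B Bᵀ (C t) = E t * Matrix.fromBlocks 1 0 0 (C t)) ∧
      IsUnit (Matrix.fromBlocks A B Bᵀ (C t)) ∧
      (Matrix.fromBlocks A B Bᵀ (C t))⁻¹
        = Matrix.fromBlocks 1 0 0 (C t)⁻¹ * (E t)⁻¹ := by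
    intro t ht1 ht2 hEu
    have hCu : IsUnit (C t) := hCinv t ht1 ht2
    have hCd : IsUnit (C t).det := (Matrix.isUnit_iff_isUnit_det _).mp hCu
    have hfac : Matrix.fromBlocks A B Bᵀ (C t) = E t * Matrix.fromBlocks 1 0 0 (C t) := by
      rw [hEdef]
      rw [Matrix.fromBlocks_multiply]
      simp [Matrix.mul_assoc, Matrix.nonsing_inv_mul (C t) hCd]
    have hDu : IsUnit (Matrix.fromBlocks (1 : Matrix (Fin m) (Fin m) ℝ) 0 0 (C t)) :=
      Matrix.isUnit_fromBlocks_zero₁₂.mpr ⟨isUnit_one, hCu⟩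
    have hNu : IsUnit (Matrix.fromBlocks A B Bᵀ (C t)) := by
      rw [hfac]; exact hEu.mul hDu
    refine ⟨hfac, hNu, ?_⟩
    apply Matrix.inv_eq_right_inv
    rw [hfac]
    have h1 : Matrix.fromBlocks (1 : Matrix (Fin m) (Fin m) ℝ) 0 0 (C t) *
        Matrix.fromBlocks 1 0 0 (C t)⁻¹ = 1 := by
      rw [Matrix.fromBlocks_multiply]
      simp [Matrix.mul_nonsing_inv (C t) hCd, Matrix.fromBlocks_one]
    calc E t * Matrix.fromBlocks 1 0 0 (C t) *
          (Matrix.fromBlocks 1 0 0 (C t)⁻¹ * (E t)⁻¹)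
        = E t * (Matrix.fromBlocks 1 0 0 (C t) *
          Matrix.fromBlocks 1 0 0 (C t)⁻¹) * (E t)⁻¹ := by
          simp only [Matrix.mul_assoc]
      _ = E t * (E t)⁻¹ := by rw [h1, Matrix.mul_one]
      _ = 1 := Matrix.mul_nonsing_inv _ ((Matrix.isUnit_iff_isUnit_det _).mp hEu)
  -- compute E₀⁻¹
  have hE₀inv : E₀⁻¹ = Matrix.fromBlocks A⁻¹ 0 (-(Bᵀ * A⁻¹)) 1 := by
    apply Matrix.inv_eq_right_inv
    rw [hE₀def, Matrix.fromBlocks_multiply]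
    have hAd : IsUnit A.det := (Matrix.isUnit_iff_isUnit_det _).mp hA
    simp [Matrix.mul_nonsing_inv A hAd, Matrix.fromBlocks_one]
  -- the limit of the inverse
  have hDlim : Tendsto (fun t => Matrix.fromBlocks (1 : Matrix (Fin m) (Fin m) ℝ) 0 0 (C t)⁻¹)
      l (nhds (Matrix.fromBlocks 1 0 0 0)) := by
    have hfb : Continuous (fun X : Matrix (Fin k) (Fin k) ℝ =>
        Matrix.fromBlocks (1 : Matrix (Fin m) (Fin m) ℝ) 0 0 X) :=
      Continuous.matrix_fromBlocks continuous_const continuous_const continuous_const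
        continuous_id
    exact (hfb.continuousAt.tendsto).comp hCinv0
  have hEinvlim : Tendsto (fun t => (E t)⁻¹) l (nhds E₀⁻¹) := by
    have hc : ContinuousAt Inv.inv E₀ := continuousAt_matrix_inv E₀ (by
      rw [Ring.inverse_eq_inv']
      exact continuousAt_inv₀ hE₀det)
    exact Filter.Tendsto.comp hc hEt
  have hprod : Tendsto (fun t => Matrix.fromBlocks (1 : Matrix (Fin m) (Fin m) ℝ) 0 0 (C t)⁻¹
      * (E t)⁻¹) l (nhds (Matrix.fromBlocks 1 0 0 0 * E₀⁻¹)) :=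
    hDlim.mul hEinvlim
  have hlimval : (Matrix.fromBlocks (1 : Matrix (Fin m) (Fin m) ℝ) 0 0 0) * E₀⁻¹
      = Matrix.fromBlocks A⁻¹ 0 0 0 := by
    rw [hE₀inv, Matrix.fromBlocks_multiply]
    simp
  rw [hlimval] at hprod
  have hNlim : Tendsto (fun t => (Matrix.fromBlocks A B Bᵀ (C t))⁻¹) l
      (nhds (Matrix.fromBlocks A⁻¹ 0 0 0)) := by
    apply hprod.congr'
    filter_upwards [hS] with t ⟨h1, h2, h3⟩
    exact ((key t h1 h2 h3).2.2).symm
  -- extract t₁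
  have hSmem : {t : ℝ | 0 < t ∧ t < t₀ ∧ IsUnit (E t)} ∈ l := hS
  rw [hl, mem_nhdsGT_iff_exists_Ioo_subset] at hSmem
  obtain ⟨u, hu, hsub⟩ := hSmem
  refine ⟨min u t₀, lt_min hu ht₀, min_le_right _ _, ?_, ?_⟩
  · intro t ht1 ht2
    have htS : t ∈ {t : ℝ | 0 < t ∧ t < t₀ ∧ IsUnit (E t)} :=
      hsub ⟨ht1, lt_of_lt_of_le ht2 (min_le_left _ _)⟩
    exact (key t htS.1 htS.2.1 htS.2.2).2.1
  · intro i j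
    have := tendsto_pi_nhds.mp hNlim i
    exact tendsto_pi_nhds.mp this j
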